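/- Let L be a number field that is Galois over ℚ with G = Gal(L/ℚ), let 𝒪 be its ring of integers, 𝒫 the set of nonzero prime ideals of 𝒪, ℐ the group of fractional ideals of L and ℐ⁺ the monoid of nonzero integral ideals. Let S ⊆ 𝒫 be a finite subset and r > 0 an integer. Then ℐ contains a G-stable subgroup M that is a free ℤ[G]-module of rank r such that: (i) the only integral ideal belonging to M is the unit ideal 𝒪 (i.e. M ∩ ℐ⁺ is trivial), and (ii) no prime ideal π ∈ S occurs in the prime factorization of any ideal in M. -/

import Mathlib

set_option synthInstance.maxHeartbeats 400000
set_option maxHeartbeats 1000000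

open IsDedekindDomain NumberField IntermediateField
set_option linter.unusedSectionVars false
set_option linter.unusedVariables false
set_option linter.unnecessarySimpa false
set_option linter.unusedTactic false

/-- The action of an element `σ ∈ Gal(L/ℚ)` on the set of nonzero prime ideals of the
ring of integers of `L`, via the restriction of `σ` to the ring of integers. -/
noncomputable def galPrime (L : Type*) [Field L] [NumberField L] [IsGalois ℚ L]
    (σ : L ≃ₐ[ℚ] L) (π : HeightOneSpectrum (𝓞 L)) :
    HeightOneSpectrum (𝓞 L) where
  asIdeal := Ideal.map (galRestrict ℤ ℚ L (𝓞 L) σ) π.asIdeal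
  isPrime := by
    haveI := π.isPrime
    exact Ideal.map_isPrime_of_equiv (galRestrict ℤ ℚ L (𝓞 L) σ : (𝓞 L) ≃ₐ[ℤ] (𝓞 L))
  ne_bot := by
    rw [Ne, Ideal.map_eq_bot_iff_of_injective
      (AlgEquiv.injective (galRestrict ℤ ℚ L (𝓞 L) σ))]
    exact π.ne_bot

section Aux

variable (L : Type*) [Field L] [NumberField L] [IsGalois ℚ L]

lemma galPrime_asIdeal (σ : L ≃ₐ[ℚ] L) (π : HeightOneSpectrum (𝓞 L)) :
    (galPrime L σ π).asIdeal = Ideal.map (galRestrict ℤ ℚ L (𝓞 L) σ) π.asIdeal := rfl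

lemma galPrime_one (π : HeightOneSpectrum (𝓞 L)) : galPrime L 1 π = π := by
  apply HeightOneSpectrum.ext
  rw [galPrime_asIdeal, map_one]
  exact Ideal.map_id _

lemma galPrime_mul (σ τ : L ≃ₐ[ℚ] L) (π : HeightOneSpectrum (𝓞 L)) :
    galPrime L (σ * τ) π = galPrime L σ (galPrime L τ π) := by
  apply HeightOneSpectrum.ext
  simp only [galPrime_asIdeal, map_mul]
  rw [show Ideal.map ((galRestrict ℤ ℚ L (𝓞 L)) τ) π.asIdeal
      = Ideal.span (((galRestrict ℤ ℚ L (𝓞 L)) τ) '' π.asIdeal) from rfl,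
    Ideal.map_span,
    show Ideal.map ((galRestrict ℤ ℚ L (𝓞 L)) σ * (galRestrict ℤ ℚ L (𝓞 L)) τ) π.asIdeal
      = Ideal.span ((⇑((galRestrict ℤ ℚ L (𝓞 L)) σ * (galRestrict ℤ ℚ L (𝓞 L)) τ)) '' π.asIdeal) from rfl,
    ← Set.image_comp]
  rfl

lemma mem_galPrime (σ : L ≃ₐ[ℚ] L) (π : HeightOneSpectrum (𝓞 L)) {x : 𝓞 L}
    (hx : x ∈ π.asIdeal) : galRestrict ℤ ℚ L (𝓞 L) σ x ∈ (galPrime L σ π).asIdeal :=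
  Ideal.mem_map_of_mem _ hx

lemma natCast_mem_galPrime (σ : L ≃ₐ[ℚ] L) (π : HeightOneSpectrum (𝓞 L)) {p : ℕ}
    (hp : (p : 𝓞 L) ∈ π.asIdeal) : (p : 𝓞 L) ∈ (galPrime L σ π).asIdeal := by
  have := mem_galPrime L σ π hp
  rwa [map_natCast] at this

lemma heightOneSpectrum_coprime_elim (π : HeightOneSpectrum (𝓞 L)) {p q : ℕ}
    (hc : Nat.Coprime p q) (hp : (p : 𝓞 L) ∈ π.asIdeal) (hq : (q : 𝓞 L) ∈ π.asIdeal) :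
    False := by
  haveI := π.isPrime
  apply π.isPrime.ne_top
  rw [Ideal.eq_top_iff_one]
  have hb := Nat.gcd_eq_gcd_ab p q
  rw [hc.gcd_eq_one] at hb
  have : ((1 : ℤ) : 𝓞 L) = (p : 𝓞 L) * ((Nat.gcdA p q : ℤ) : 𝓞 L)
      + (q : 𝓞 L) * ((Nat.gcdB p q : ℤ) : 𝓞 L) := by
    exact_mod_cast congrArg (fun z : ℤ => (z : 𝓞 L)) hb
  rw [show (1 : 𝓞 L) = ((1:ℤ) : 𝓞 L) by norm_num, this]
  exact Ideal.add_mem _ (Ideal.mul_mem_right _ _ hp) (Ideal.mul_mem_right _ _ hq)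

lemma exists_heightOneSpectrum_mem (z : 𝓞 L) (hz : z ≠ 0) {p : ℕ} (hp : p.Prime)
    (hdvd : p ∣ Ideal.absNorm (Ideal.span {z})) :
    ∃ π : HeightOneSpectrum (𝓞 L), (p : 𝓞 L) ∈ π.asIdeal ∧ z ∈ π.asIdeal := by
  set I := Ideal.span {z} with hI
  have hIbot : I ≠ ⊥ := by
    simpa [hI, Ideal.span_singleton_eq_bot] using hz
  haveI : Fintype (𝓞 L ⧸ I) := @Fintype.ofFinite _ (Ideal.finiteQuotientOfFreeOfNeBot I hIbot)
  haveI : Fact p.Prime := ⟨hp⟩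
  have hcard : p ∣ Fintype.card (𝓞 L ⧸ I) := by
    rwa [← Nat.card_eq_fintype_card, ← Submodule.cardQuot_apply, ← Ideal.absNorm_apply]
  obtain ⟨x, hx⟩ := exists_prime_addOrderOf_dvd_card p hcard
  have hJ : I ⊔ Ideal.span {(p : 𝓞 L)} ≠ ⊤ := by
    intro htop
    rw [Ideal.eq_top_iff_one] at htop
    obtain ⟨y, hy, w, hw, hyw⟩ := Submodule.mem_sup.mp htop
    obtain ⟨c, hc⟩ := Ideal.mem_span_singleton'.mp hw
    have hx0 : x ≠ 0 := by
      intro h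
      rw [h, addOrderOf_zero] at hx
      exact hp.one_lt.ne' hx.symm
    apply hx0
    have h1 : (1 : 𝓞 L ⧸ I) = Ideal.Quotient.mk I c * (p : 𝓞 L ⧸ I) := by
      rw [← map_one (Ideal.Quotient.mk I), ← hyw, map_add,
        Ideal.Quotient.eq_zero_iff_mem.mpr hy, zero_add, ← hc, map_mul, map_natCast]
    have hpx : (p : 𝓞 L ⧸ I) * x = 0 := by
      rw [← nsmul_eq_mul, ← hx, addOrderOf_nsmul_eq_zero]
    calc x = 1 * x := (one_mul x).symm
    _ = Ideal.Quotient.mk I c * ((p : 𝓞 L ⧸ I) * x) := by rw [h1, mul_assoc]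
    _ = 0 := by rw [hpx, mul_zero]
  obtain ⟨m, hm, hle⟩ := Ideal.exists_le_maximal _ hJ
  have hpm : (p : 𝓞 L) ∈ m :=
    hle (Ideal.mem_sup_right (Ideal.mem_span_singleton_self _))
  refine ⟨⟨m, hm.isPrime, ?_⟩, hpm, hle (Ideal.mem_sup_left (Ideal.subset_span rfl))⟩
  intro hbot
  rw [hbot] at hpm
  exact (Nat.cast_ne_zero (R := 𝓞 L)).mpr hp.pos.ne' (by simpa using hpm)

lemma adjoin_coe_sub_int (θ : 𝓞 L) (hθ : ℚ⟮(θ : L)⟯ = ⊤) (a : ℤ) :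
    ℚ⟮(θ : L) - (a : L)⟯ = ⊤ := by
  have hle : ℚ⟮(θ : L)⟯ ≤ ℚ⟮(θ : L) - (a : L)⟯ := by
    rw [IntermediateField.adjoin_simple_le_iff]
    have h1 : (θ : L) - (a : L) ∈ ℚ⟮(θ : L) - (a : L)⟯ :=
      IntermediateField.mem_adjoin_simple_self ℚ _
    have h2 : ((a : L)) ∈ ℚ⟮(θ : L) - (a : L)⟯ := intCast_mem _ a
    simpa using add_mem h1 h2
  rw [eq_top_iff]
  exact le_trans (le_of_eq hθ.symm) hle

lemma absNorm_span_theta (θ : 𝓞 L) (hθ : ℚ⟮(θ : L)⟯ = ⊤) (a : ℤ) :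
    Ideal.absNorm (Ideal.span {θ - (a : 𝓞 L)}) = ((minpoly ℤ (θ : L)).eval a).natAbs := by
  rw [Ideal.absNorm_span_singleton]
  set w : L := (θ : L) - (a : L) with hw
  have hint : IsIntegral ℚ w := IsIntegral.of_finite ℚ w
  let e : ℚ⟮w⟯ ≃ₐ[ℚ] L :=
    (IntermediateField.equivOfEq (adjoin_coe_sub_int L θ hθ a)).trans IntermediateField.topEquiv
  let pb := (IntermediateField.adjoin.powerBasis hint).map e
  have hgen : pb.gen = w := by
    simp [pb, e, IntermediateField.adjoin.powerBasis_gen]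
  have h1 : Algebra.norm ℚ w = (-1) ^ pb.dim * (minpoly ℚ w).coeff 0 := by
    conv_lhs => rw [← hgen]
    rw [Algebra.PowerBasis.norm_gen_eq_coeff_zero_minpoly pb, hgen]
  have h2 : minpoly ℚ w = (minpoly ℚ (θ : L)).comp (Polynomial.X + Polynomial.C (a : ℚ)) := by
    rw [show w = (θ : L) - algebraMap ℚ L (a : ℚ) by rw [hw]; norm_num]
    exact minpoly.sub_algebraMap _ _
  have h3 : minpoly ℚ (θ : L) = (minpoly ℤ (θ : L)).map (algebraMap ℤ ℚ) :=
    minpoly.isIntegrallyClosed_eq_field_fractions' ℚ (NumberField.RingOfIntegers.isIntegral_coe θ)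
  have h4 : (minpoly ℚ w).coeff 0 = (((minpoly ℤ (θ : L)).eval a : ℤ) : ℚ) := by
    rw [h2, Polynomial.coeff_zero_eq_eval_zero, Polynomial.eval_comp]
    simp only [Polynomial.eval_add, Polynomial.eval_X, Polynomial.eval_C, zero_add]
    rw [h3, algebraMap_int_eq, Polynomial.eval_intCast_map]
    rfl
  have h5 : (Algebra.norm ℤ (θ - (a : 𝓞 L)) : ℚ) = Algebra.norm ℚ w := by
    rw [Algebra.coe_norm_int (θ - (a : 𝓞 L))]
    congr 1

  have h6 : Algebra.norm ℤ (θ - (a : 𝓞 L)) = (-1) ^ pb.dim * (minpoly ℤ (θ : L)).eval a := by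
    have := h5.trans (h1.trans (by rw [h4]))
    exact_mod_cast this
  rw [h6, Int.natAbs_mul, Int.natAbs_pow]
  simp

lemma exists_good_prime (θ : 𝓞 L) (B : ℤ) (hB : B ≠ 0) :
    ∃ (p : ℕ) (a : ℤ), p.Prime ∧ ¬((p : ℤ) ∣ B) ∧
      (p : ℤ) ∣ (minpoly ℤ (θ : L)).eval a ∧ (minpoly ℤ (θ : L)).eval a ≠ 0 := by
  set F := minpoly ℤ (θ : L) with hF
  have hdeg : 0 < F.natDegree :=
    minpoly.natDegree_pos (NumberField.RingOfIntegers.isIntegral_coe θ)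
  set c := F.eval 0 with hc0
  by_cases hc : c = 0
  · obtain ⟨p, hple, hp⟩ := Nat.exists_infinite_primes (B.natAbs + 1)
    refine ⟨p, p, hp, ?_, ?_⟩
    · intro hdvd
      have h1 : p ∣ B.natAbs := Int.natAbs_dvd_natAbs.mpr (by simpa using hdvd)
      have h2 : p ≤ B.natAbs := Nat.le_of_dvd (Int.natAbs_pos.mpr hB) h1
      omega
    · have hX : F = Polynomial.X := by
        have hroot : Polynomial.IsRoot F 0 := by simpa [Polynomial.IsRoot] using hc
        have hth0 : (θ : L) = 0 := by
          by_contra hne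
          obtain ⟨g, hg⟩ := (Polynomial.dvd_iff_isRoot.mpr hroot)
          have hg0 : g ≠ 0 := by
            intro h0
            rw [h0, mul_zero] at hg
            rw [hF] at hg
            exact (minpoly.ne_zero (NumberField.RingOfIntegers.isIntegral_coe θ)) hg
          have haev : Polynomial.aeval (θ : L) g = 0 := by
            have h0 : Polynomial.aeval (θ : L) F = 0 := by rw [hF]; exact minpoly.aeval ℤ _
            rw [hg, map_mul] at h0
            simp only [map_sub, Polynomial.aeval_X, Polynomial.aeval_C, map_zero, sub_zero] at h0
            rcases mul_eq_zero.mp h0 with h | h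
            · exact absurd (by simpa using h) hne
            · exact h
          have hdvd2 : F ∣ g := by
            rw [hF]
            exact minpoly.isIntegrallyClosed_dvd (NumberField.RingOfIntegers.isIntegral_coe θ) haev
          have hdle : F.degree ≤ g.degree := Polynomial.degree_le_of_dvd hdvd2 hg0
          have heqd : F.degree = 1 + g.degree := by
            rw [hg, Polynomial.degree_mul]
            congr 1
            simpa using Polynomial.degree_X_sub_C (0 : ℤ)
          rw [heqd] at hdle
          have h2 : g.degree < 1 + g.degree := by
            rw [Polynomial.degree_eq_natDegree hg0]
            exact_mod_cast lt_one_add (g.natDegree)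
          exact absurd hdle (not_le.mpr h2)
        rw [hF, hth0, show (0 : L) = algebraMap ℤ L 0 by simp,
          minpoly.eq_X_sub_C_of_algebraMap_inj 0 ((algebraMap ℤ L).injective_int)]
        simp
      rw [hX]
      refine ⟨by simp, by rw [Polynomial.eval_X]; exact_mod_cast hp.pos.ne'⟩
  · set t := c * B with ht
    have htne : t ≠ 0 := mul_ne_zero hc hB
    have hfin : (⋃ v ∈ Finset.Icc (-|c|) |c|,
        {x : ℤ | (F - Polynomial.C v).IsRoot x}).Finite := by
      apply Set.Finite.biUnion (Finset.finite_toSet _)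
      intro v _
      apply Polynomial.finite_setOf_isRoot
      intro h0
      have hFC : F = Polynomial.C v := by
        have := sub_eq_zero.mp h0
        exact this
      rw [hFC] at hdeg
      simp at hdeg
    have hinf : (Set.range fun k : ℤ => t * k).Infinite :=
      Set.infinite_range_of_injective (mul_right_injective₀ htne)
    obtain ⟨x, hxr, hxb⟩ := (hinf.diff hfin).nonempty
    obtain ⟨k, rfl⟩ := hxr
    have hbig : |c| < |F.eval (t * k)| := by
      by_contra hle
      push_neg at hle
      apply hxb
      refine Set.mem_biUnion (Finset.mem_Icc.mpr (abs_le.mp hle)) ?_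
      simp [Polynomial.IsRoot, sub_eq_zero]
    obtain ⟨s, hs⟩ : (t * k) ∣ (F.eval (t * k) - c) := by
      simpa using Polynomial.sub_dvd_eval_sub (t * k) 0 F
    have heq : F.eval (t * k) = c * (1 + B * (k * s)) := by
      have h9 : F.eval (t * k) = c + t * k * s := by linarith [hs]
      rw [h9, ht]; ring
    set wv := 1 + B * (k * s) with hwv
    have hw1 : 1 < |wv| := by
      have h2 : |c| * 1 < |c| * |wv| := by
        rw [mul_one, ← abs_mul, ← heq]; exact hbig
      exact lt_of_mul_lt_mul_left h2 (abs_nonneg c)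
    obtain ⟨p, hpprime, hpdvd⟩ := Int.exists_prime_and_dvd (n := wv) (by
      intro h1
      have : |wv| = 1 := by
        rw [Int.abs_eq_natAbs, h1]; rfl
      omega)
    refine ⟨p.natAbs, t * k, Int.prime_iff_natAbs_prime.mp hpprime, ?_, ?_⟩
    · intro hdvd
      have h1 : (p.natAbs : ℤ) ∣ wv := Int.natAbs_dvd.mpr hpdvd
      have h2 : (p.natAbs : ℤ) ∣ B * (k * s) := Dvd.dvd.mul_right hdvd _
      have h3 : (p.natAbs : ℤ) ∣ 1 := by
        have := dvd_sub h1 h2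
        simpa [hwv] using this
      have := Int.prime_iff_natAbs_prime.mp hpprime
      exact this.not_dvd_one (by exact_mod_cast h3)
    · refine ⟨by rw [heq]; exact Dvd.dvd.mul_left (Int.natAbs_dvd.mpr hpdvd) c, ?_⟩
      rw [heq]
      exact mul_ne_zero hc (by intro h0; rw [h0] at hw1; simp at hw1)


lemma exists_prime_family (θ : 𝓞 L) (hθ : ℚ⟮(θ : L)⟯ = ⊤) (B₀ : ℤ) (hB₀ : B₀ ≠ 0) (k : ℕ) :
    ∃ (π : Fin k → HeightOneSpectrum (𝓞 L)) (p : Fin k → ℕ),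
      (∀ i, (p i).Prime) ∧ (∀ i, ¬((p i : ℤ) ∣ B₀)) ∧
      (∀ i j, i ≠ j → p i ≠ p j) ∧
      (∀ i, ((p i : 𝓞 L)) ∈ (π i).asIdeal) ∧
      (∀ i, ∃ b : ℤ, θ - (b : 𝓞 L) ∈ (π i).asIdeal) := by
  induction k with
  | zero =>
      exact ⟨Fin.elim0, Fin.elim0, fun i => i.elim0, fun i => i.elim0,
        fun i => i.elim0, fun i => i.elim0, fun i => i.elim0⟩
  | succ n ih =>
      obtain ⟨π, p, h1, h2, h3, h4, h5⟩ := ih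
      have hBne : B₀ * ∏ i, (p i : ℤ) ≠ 0 := by
        apply mul_ne_zero hB₀
        rw [Finset.prod_ne_zero_iff]
        intro i _
        exact_mod_cast (h1 i).pos.ne'
      obtain ⟨q, b, hq, hqB, hqd, hevne⟩ := exists_good_prime L θ _ hBne
      have hzne : θ - (b : 𝓞 L) ≠ 0 := by
        intro h0
        apply hevne
        have hcoe : (θ : L) = algebraMap ℤ L b := by
          have h0' : θ = (b : 𝓞 L) := sub_eq_zero.mp h0
          rw [h0']
          push_cast
          simp
        rw [hcoe, minpoly.eq_X_sub_C_of_algebraMap_inj b ((algebraMap ℤ L).injective_int)]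
        simp
      have hqn : q ∣ Ideal.absNorm (Ideal.span {θ - (b : 𝓞 L)}) := by
        rw [absNorm_span_theta L θ hθ b]
        have := Int.natAbs_dvd_natAbs.mpr hqd
        simpa using this
      obtain ⟨π0, hπ0p, hπ0z⟩ := exists_heightOneSpectrum_mem L _ hzne hq hqn
      refine ⟨Fin.cons π0 π, Fin.cons q p, ?_, ?_, ?_, ?_, ?_⟩
      · intro i
        refine Fin.cases ?_ ?_ i <;> simp [hq, h1]
      · intro i
        refine Fin.cases ?_ ?_ i
        · simpa using fun hd => hqB (hd.mul_right _)
        · simpa using h2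
      · have hne : ∀ j', q ≠ p j' := by
          intro j' hqe
          apply hqB
          rw [hqe]
          exact Dvd.dvd.mul_left
            (by exact_mod_cast Finset.dvd_prod_of_mem (fun i => ((p i : ℤ))) (Finset.mem_univ j')) B₀
        intro i j hij
        rcases Fin.eq_zero_or_eq_succ i with rfl | ⟨i', rfl⟩ <;>
          rcases Fin.eq_zero_or_eq_succ j with rfl | ⟨j', rfl⟩
        · exact absurd rfl hij
        · simpa using hne j'
        · simpa using fun h => (hne i' h.symm)
        · simp only [Fin.cons_succ]
          exact h3 i' j' (fun h => hij (by rw [h]))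
      · intro i
        refine Fin.cases ?_ ?_ i <;> simp [hπ0p, h4]
      · intro i
        refine Fin.cases ?_ ?_ i
        · exact ⟨b, hπ0z⟩
        · intro i'
          simpa using h5 i'

lemma exists_theta : ∃ θ : 𝓞 L, ℚ⟮(θ : L)⟯ = ⊤ := by
  obtain ⟨α, hα⟩ := Field.exists_primitive_element ℚ L
  have halg : IsAlgebraic ℤ α :=
    (IsFractionRing.isAlgebraic_iff ℤ ℚ L).mpr (.of_finite _ α)
  obtain ⟨x, y, hy, hxy⟩ : ∃ x : integralClosure ℤ L, ∃ y ≠ (0 : ℤ),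
      algebraMap ℤ L y * α = x := by
    obtain ⟨y, hy, hint⟩ := halg.exists_integral_multiple
    exact ⟨⟨y • α, hint⟩, y, hy, (Algebra.smul_def y α).symm⟩
  refine ⟨⟨(x : L), x.2⟩, ?_⟩
  rw [eq_top_iff, ← hα]
  rw [IntermediateField.adjoin_simple_le_iff]
  have hyL : (algebraMap ℤ L y) ≠ 0 := by
    simpa using fun h => hy ((algebraMap ℤ L).injective_int (by simpa using h))
  have hx : ((⟨(x : L), x.2⟩ : 𝓞 L) : L) ∈ ℚ⟮((⟨(x : L), x.2⟩ : 𝓞 L) : L)⟯ :=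
    IntermediateField.mem_adjoin_simple_self ℚ _
  have hα2 : α = ((y : ℚ))⁻¹ • (((⟨(x : L), x.2⟩ : 𝓞 L) : L)) := by
    have hcoe : ((⟨(x : L), x.2⟩ : 𝓞 L) : L) = algebraMap ℤ L y * α := by
      exact_mod_cast hxy.symm
    rw [hcoe, Algebra.smul_def]
    rw [show algebraMap ℤ L y = algebraMap ℚ L ((y : ℚ)) by simp]
    rw [← mul_assoc, ← map_mul]
    rw [inv_mul_cancel₀ (by exact_mod_cast hy)]
    simp
  rw [hα2]
  exact IntermediateField.smul_mem _ hx

lemma galPrime_fix_eq_one (θ : 𝓞 L) (π : HeightOneSpectrum (𝓞 L)) {p : ℕ} (hp : p.Prime)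
    (b : ℤ) (hpmem : (p : 𝓞 L) ∈ π.asIdeal) (hz : θ - (b : 𝓞 L) ∈ π.asIdeal)
    (hnd : ∀ σ : L ≃ₐ[ℚ] L, σ ≠ 1 →
      ¬(p ∣ Ideal.absNorm (Ideal.span {galRestrict ℤ ℚ L (𝓞 L) σ θ - θ})))
    (σ : L ≃ₐ[ℚ] L) (hfix : galPrime L σ π = π) : σ = 1 := by
  by_contra hσ
  have h1 : galRestrict ℤ ℚ L (𝓞 L) σ (θ - (b : 𝓞 L)) ∈ π.asIdeal := by
    have := mem_galPrime L σ π hz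
    rwa [hfix] at this
  have h2 : galRestrict ℤ ℚ L (𝓞 L) σ (θ - (b : 𝓞 L))
      = galRestrict ℤ ℚ L (𝓞 L) σ θ - (b : 𝓞 L) := by
    rw [map_sub, map_intCast]
  have hu : galRestrict ℤ ℚ L (𝓞 L) σ θ - θ ∈ π.asIdeal := by
    have h3 := Ideal.sub_mem _ h1 hz
    rw [h2] at h3
    have : galRestrict ℤ ℚ L (𝓞 L) σ θ - (b : 𝓞 L) - (θ - (b : 𝓞 L))
        = galRestrict ℤ ℚ L (𝓞 L) σ θ - θ := by ring
    rwa [this] at h3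
  have hm : ((Ideal.absNorm (Ideal.span {galRestrict ℤ ℚ L (𝓞 L) σ θ - θ}) : ℕ) : 𝓞 L)
      ∈ π.asIdeal := by
    have hle : Ideal.span {galRestrict ℤ ℚ L (𝓞 L) σ θ - θ} ≤ π.asIdeal := by
      rw [Ideal.span_le]
      simpa using hu
    exact hle (Ideal.absNorm_mem _)
  exact heightOneSpectrum_coprime_elim L π ((hp.coprime_iff_not_dvd).mpr (hnd σ hσ)) hpmem hm

lemma galPrime_free (θ : 𝓞 L) (π : HeightOneSpectrum (𝓞 L)) {p : ℕ} (hp : p.Prime)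
    (b : ℤ) (hpmem : (p : 𝓞 L) ∈ π.asIdeal) (hz : θ - (b : 𝓞 L) ∈ π.asIdeal)
    (hnd : ∀ σ : L ≃ₐ[ℚ] L, σ ≠ 1 →
      ¬(p ∣ Ideal.absNorm (Ideal.span {galRestrict ℤ ℚ L (𝓞 L) σ θ - θ})))
    (σ τ : L ≃ₐ[ℚ] L) (h : galPrime L σ π = galPrime L τ π) : σ = τ := by
  have hfix : galPrime L (τ⁻¹ * σ) π = π := by
    rw [galPrime_mul, h, ← galPrime_mul, inv_mul_cancel, galPrime_one]
  have := galPrime_fix_eq_one L θ π hp b hpmem hz hnd _ hfix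
  rw [inv_mul_eq_one] at this
  exact this.symm

theorem exists_free_galois_submodule_of_fractional_ideals'
    (S : Finset (HeightOneSpectrum (𝓞 L))) (r : ℕ) (hr : 0 < r) :
    ∃ j : ((Fin r × (L ≃ₐ[ℚ] L)) →₀ ℤ) →+ (HeightOneSpectrum (𝓞 L) →₀ ℤ),
      Function.Injective j ∧
      (∀ (σ : L ≃ₐ[ℚ] L) (v : (Fin r × (L ≃ₐ[ℚ] L)) →₀ ℤ),
        j (Finsupp.mapDomain (fun p => (p.1, σ * p.2)) v) =
          Finsupp.mapDomain (galPrime L σ) (j v)) ∧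
      (∀ v, (∀ π, 0 ≤ j v π) → j v = 0) ∧
      (∀ v, ∀ π ∈ S, j v π = 0) := by
  classical
  obtain ⟨θ, hθ⟩ := exists_theta L
  -- nonvanishing of the conjugate differences
  have hune : ∀ σ : L ≃ₐ[ℚ] L, σ ≠ 1 → galRestrict ℤ ℚ L (𝓞 L) σ θ - θ ≠ 0 := by
    intro σ hσ h0
    apply hσ
    have hfixθ : σ (algebraMap (𝓞 L) L θ) = algebraMap (𝓞 L) L θ := by
      have h1 := congrArg (algebraMap (𝓞 L) L) (sub_eq_zero.mp h0)
      rwa [algebraMap_galRestrict_apply] at h1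
    have htop : Algebra.adjoin ℚ {((θ : L))} = ⊤ := by
      have h2 := congrArg IntermediateField.toSubalgebra hθ
      rwa [IntermediateField.adjoin_simple_toSubalgebra_of_isAlgebraic
        (IsIntegral.of_finite ℚ _).isAlgebraic, IntermediateField.top_toSubalgebra] at h2
    have hsub : Algebra.adjoin ℚ {((θ : L))}
        ≤ AlgHom.equalizer (σ : L →ₐ[ℚ] L) (AlgHom.id ℚ L) := by
      apply Algebra.adjoin_le
      intro x hx
      rw [Set.mem_singleton_iff] at hx
      subst hx
      exact hfixθ
    ext x
    have hx : x ∈ Algebra.adjoin ℚ {((θ : L))} := htop ▸ Algebra.mem_top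
    exact hsub hx
  -- the bad number
  set NB : ℕ := (∏ σ ∈ Finset.univ.erase (1 : L ≃ₐ[ℚ] L),
      Ideal.absNorm (Ideal.span {galRestrict ℤ ℚ L (𝓞 L) σ θ - θ}))
    * (∏ π' ∈ S, Ideal.absNorm π'.asIdeal) with hNBdef
  have hNB : NB ≠ 0 := by
    apply Nat.mul_ne_zero <;> rw [Finset.prod_ne_zero_iff] <;> intro x hx
    · rw [Ne, Ideal.absNorm_eq_zero_iff, Ideal.span_singleton_eq_bot]
      exact hune x (Finset.mem_erase.mp hx).1
    · rw [Ne, Ideal.absNorm_eq_zero_iff]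
      exact x.ne_bot
  have hndu : ∀ p : ℕ, ¬((p : ℤ) ∣ (NB : ℤ)) → ∀ σ : L ≃ₐ[ℚ] L, σ ≠ 1 →
      ¬(p ∣ Ideal.absNorm (Ideal.span {galRestrict ℤ ℚ L (𝓞 L) σ θ - θ})) := by
    intro p hpNB σ hσ hdvd
    apply hpNB
    have h3 : Ideal.absNorm (Ideal.span {galRestrict ℤ ℚ L (𝓞 L) σ θ - θ}) ∣ NB :=
      dvd_mul_of_dvd_left
        (Finset.dvd_prod_of_mem _ (Finset.mem_erase.mpr ⟨hσ, Finset.mem_univ σ⟩)) _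
    exact_mod_cast hdvd.trans h3
  have hndS : ∀ p : ℕ, ¬((p : ℤ) ∣ (NB : ℤ)) → ∀ π' ∈ S, ¬(p ∣ Ideal.absNorm π'.asIdeal) := by
    intro p hpNB π' hπ' hdvd
    apply hpNB
    have h3 : Ideal.absNorm π'.asIdeal ∣ NB :=
      dvd_mul_of_dvd_right (Finset.dvd_prod_of_mem _ hπ') _
    exact_mod_cast hdvd.trans h3
  -- two families of primes
  obtain ⟨π₁, p₁, hp₁, hd₁, hdist₁, hmem₁, hz₁⟩ :=
    exists_prime_family L θ hθ (NB : ℤ) (by exact_mod_cast hNB) r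
  have hP : (NB : ℤ) * ∏ i, (p₁ i : ℤ) ≠ 0 := by
    apply mul_ne_zero (by exact_mod_cast hNB)
    rw [Finset.prod_ne_zero_iff]
    intro i _
    exact_mod_cast (hp₁ i).pos.ne'
  obtain ⟨π₂, p₂, hp₂, hd₂, hdist₂, hmem₂, hz₂⟩ := exists_prime_family L θ hθ _ hP r
  have hd₂NB : ∀ i, ¬((p₂ i : ℤ) ∣ (NB : ℤ)) := fun i h => hd₂ i (h.mul_right _)
  have hp12 : ∀ i j, p₁ i ≠ p₂ j := by
    intro i j h
    apply hd₂ j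
    rw [← h]
    exact Dvd.dvd.mul_left
      (by exact_mod_cast Finset.dvd_prod_of_mem (fun i => ((p₁ i : ℤ))) (Finset.mem_univ i))
      (NB : ℤ)
  -- the two orbit maps
  set A : Fin r × (L ≃ₐ[ℚ] L) → HeightOneSpectrum (𝓞 L) :=
    fun q => galPrime L q.2 (π₁ q.1) with hA
  set Bf : Fin r × (L ≃ₐ[ℚ] L) → HeightOneSpectrum (𝓞 L) :=
    fun q => galPrime L q.2 (π₂ q.1) with hB
  have hmemA : ∀ q, ((p₁ q.1 : 𝓞 L)) ∈ (A q).asIdeal :=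
    fun q => natCast_mem_galPrime L _ _ (hmem₁ q.1)
  have hmemB : ∀ q, ((p₂ q.1 : 𝓞 L)) ∈ (Bf q).asIdeal :=
    fun q => natCast_mem_galPrime L _ _ (hmem₂ q.1)
  have hAinj : Function.Injective A := by
    rintro ⟨i, σ⟩ ⟨i', σ'⟩ h
    have hii : i = i' := by
      by_contra hne
      exact heightOneSpectrum_coprime_elim L (A (i', σ'))
        ((Nat.coprime_primes (hp₁ i) (hp₁ i')).mpr (hdist₁ i i' hne))
        (h ▸ hmemA (i, σ)) (hmemA (i', σ'))
    subst hii
    obtain ⟨b, hb⟩ := hz₁ i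
    have := galPrime_free L θ (π₁ i) (hp₁ i) b (hmem₁ i) hb
      (fun σ hσ => hndu (p₁ i) (hd₁ i) σ hσ) σ σ' h
    rw [this]
  have hBinj : Function.Injective Bf := by
    rintro ⟨i, σ⟩ ⟨i', σ'⟩ h
    have hii : i = i' := by
      by_contra hne
      exact heightOneSpectrum_coprime_elim L (Bf (i', σ'))
        ((Nat.coprime_primes (hp₂ i) (hp₂ i')).mpr (hdist₂ i i' hne))
        (h ▸ hmemB (i, σ)) (hmemB (i', σ'))
    subst hii
    obtain ⟨b, hb⟩ := hz₂ i
    have := galPrime_free L θ (π₂ i) (hp₂ i) b (hmem₂ i) hb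
      (fun σ hσ => hndu (p₂ i) (hd₂NB i) σ hσ) σ σ' h
    rw [this]
  have hABne : ∀ q q', A q ≠ Bf q' := by
    intro q q' h
    exact heightOneSpectrum_coprime_elim L (Bf q')
      ((Nat.coprime_primes (hp₁ q.1) (hp₂ q'.1)).mpr (hp12 q.1 q'.1))
      (h ▸ hmemA q) (hmemB q')
  have hAS : ∀ q, A q ∉ S := by
    intro q hin
    have h1 : ((Ideal.absNorm (A q).asIdeal : ℕ) : 𝓞 L) ∈ (A q).asIdeal :=
      Ideal.absNorm_mem _
    exact heightOneSpectrum_coprime_elim L (A q)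
      (((hp₁ q.1).coprime_iff_not_dvd).mpr (hndS (p₁ q.1) (hd₁ q.1) _ hin))
      (hmemA q) h1
  have hBS : ∀ q, Bf q ∉ S := by
    intro q hin
    have h1 : ((Ideal.absNorm (Bf q).asIdeal : ℕ) : 𝓞 L) ∈ (Bf q).asIdeal :=
      Ideal.absNorm_mem _
    exact heightOneSpectrum_coprime_elim L (Bf q)
      (((hp₂ q.1).coprime_iff_not_dvd).mpr (hndS (p₂ q.1) (hd₂NB q.1) _ hin))
      (hmemB q) h1
  -- the homomorphism
  set F0 : Fin r × (L ≃ₐ[ℚ] L) → (HeightOneSpectrum (𝓞 L) →₀ ℤ) :=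
    fun q => Finsupp.single (A q) 1 - Finsupp.single (Bf q) 1 with hF0
  set jlin := Finsupp.linearCombination ℤ F0 with hjlin
  have happly : ∀ (v : (Fin r × (L ≃ₐ[ℚ] L)) →₀ ℤ) (π0 : HeightOneSpectrum (𝓞 L)),
      jlin v π0 = ∑ q ∈ v.support, v q * (F0 q π0) := by
    intro v π0
    rw [hjlin, Finsupp.linearCombination_apply, Finsupp.sum, Finsupp.finset_sum_apply]
    simp only [Finsupp.smul_apply, smul_eq_mul]
  have hcA : ∀ v q0, jlin v (A q0) = v q0 := by
    intro v q0
    rw [happly]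
    have hterm : ∀ q ∈ v.support, v q * (F0 q (A q0)) = if q = q0 then v q else 0 := by
      intro q _
      have hB0 : (if Bf q = A q0 then (1 : ℤ) else 0) = 0 :=
        if_neg (fun h => hABne q0 q h.symm)
      by_cases hqq : q = q0
      · subst hqq
        simp [hF0, Finsupp.single_apply, hB0]
      · have hA0 : (if A q = A q0 then (1 : ℤ) else 0) = 0 :=
          if_neg (fun h => hqq (hAinj h))
        simp [hF0, Finsupp.single_apply, hA0, hB0, hqq]
    rw [Finset.sum_congr rfl hterm, Finset.sum_ite_eq' v.support q0 (fun q => v q)]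
    split
    · rfl
    · exact (Finsupp.notMem_support_iff.mp ‹_›).symm
  have hcB : ∀ v q0, jlin v (Bf q0) = -(v q0) := by
    intro v q0
    rw [happly]
    have hterm : ∀ q ∈ v.support, v q * (F0 q (Bf q0)) = if q = q0 then -(v q) else 0 := by
      intro q _
      have hA0 : (if A q = Bf q0 then (1 : ℤ) else 0) = 0 :=
        if_neg (fun h => hABne q q0 h)
      by_cases hqq : q = q0
      · subst hqq
        simp [hF0, Finsupp.single_apply, hA0]
      · have hB0 : (if Bf q = Bf q0 then (1 : ℤ) else 0) = 0 :=
          if_neg (fun h => hqq (hBinj h))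
        simp [hF0, Finsupp.single_apply, hA0, hB0, hqq]
    rw [Finset.sum_congr rfl hterm, Finset.sum_ite_eq' v.support q0 (fun q => -(v q))]
    split
    · rfl
    · simp [Finsupp.notMem_support_iff.mp ‹_›]
  refine ⟨jlin.toAddMonoidHom, ?_, ?_, ?_, ?_⟩
  · -- injectivity
    intro v w h
    ext q
    have h1 : jlin v = jlin w := h
    rw [← hcA v q, ← hcA w q, h1]
  · -- equivariance
    intro σ v
    show jlin (Finsupp.mapDomain (fun p => (p.1, σ * p.2)) v)
      = Finsupp.mapDomain (galPrime L σ) (jlin v)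
    induction v using Finsupp.induction_linear with
    | zero => simp
    | add f g hf hg => rw [Finsupp.mapDomain_add, map_add, hf, hg, map_add,
        Finsupp.mapDomain_add]
    | single q n =>
        rw [Finsupp.mapDomain_single]
        rw [hjlin, Finsupp.linearCombination_single, Finsupp.linearCombination_single]
        rw [Finsupp.mapDomain_smul]
        congr 1
        have hmd : Finsupp.mapDomain (galPrime L σ)
            (Finsupp.single (A q) (1 : ℤ) - Finsupp.single (Bf q) 1)
            = Finsupp.single (galPrime L σ (A q)) 1
              - Finsupp.single (galPrime L σ (Bf q)) 1 := by
          have hms := map_sub (Finsupp.mapDomain.addMonoidHom (galPrime L σ))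
            (Finsupp.single (A q) (1 : ℤ)) (Finsupp.single (Bf q) 1)
          simpa [Finsupp.mapDomain.addMonoidHom_apply, Finsupp.mapDomain_single] using hms
        have h1 : A (q.1, σ * q.2) = galPrime L σ (A q) := by
          rw [hA]
          exact galPrime_mul L σ q.2 (π₁ q.1)
        have h2 : Bf (q.1, σ * q.2) = galPrime L σ (Bf q) := by
          rw [hB]
          exact galPrime_mul L σ q.2 (π₂ q.1)
        simp only [hF0, hmd, h1, h2]
  · -- positivity
    intro v hpos
    have hv : v = 0 := by
      ext q
      have h1 : 0 ≤ v q := by rw [← hcA v q]; exact hpos (A q)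
      have h2 : 0 ≤ -(v q) := by rw [← hcB v q]; exact hpos (Bf q)
      simp only [Finsupp.coe_zero, Pi.zero_apply]
      omega
    show jlin v = 0
    rw [hv, map_zero]
  · -- avoiding S
    intro v π0 hπ0
    show jlin v π0 = 0
    rw [happly]
    apply Finset.sum_eq_zero
    intro q _
    have hA0 : (if A q = π0 then (1 : ℤ) else 0) = 0 :=
      if_neg (fun h => hAS q (by rw [h]; exact hπ0))
    have hB0 : (if Bf q = π0 then (1 : ℤ) else 0) = 0 :=
      if_neg (fun h => hBS q (by rw [h]; exact hπ0))
    simp [hF0, Finsupp.single_apply, hA0, hB0]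

end Aux

/-- Let `L/ℚ` be Galois with group `G`, `𝒫` the set of nonzero prime
ideals of its ring of integers, `ℐ ≅ 𝒫 →₀ ℤ` the group of fractional ideals (the free
abelian group on `𝒫`, an ideal being integral exactly when all its exponents are `≥ 0`),
`S ⊆ 𝒫` finite and `r > 0`.  Then `ℐ` contains a free `ℤ[G]`-submodule of rank `r`
(encoded as the range of an injective `G`-equivariant homomorphism `j` from
`ℤ[G]^r = (Fin r × G) →₀ ℤ`) such that (i) the only integral ideal in it is the unit
ideal, and (ii) no prime of `S` occurs in the factorization of any of its members. -/
theorem exists_free_galois_submodule_of_fractional_ideals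
    (L : Type*) [Field L] [NumberField L] [IsGalois ℚ L]
    (S : Finset (HeightOneSpectrum (𝓞 L))) (r : ℕ) (hr : 0 < r) :
    ∃ j : ((Fin r × (L ≃ₐ[ℚ] L)) →₀ ℤ) →+ (HeightOneSpectrum (𝓞 L) →₀ ℤ),
      Function.Injective j ∧
      (∀ (σ : L ≃ₐ[ℚ] L) (v : (Fin r × (L ≃ₐ[ℚ] L)) →₀ ℤ),
        j (Finsupp.mapDomain (fun p => (p.1, σ * p.2)) v) =
          Finsupp.mapDomain (galPrime L σ) (j v)) ∧
      (∀ v, (∀ π, 0 ≤ j v π) → j v = 0) ∧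
      (∀ v, ∀ π ∈ S, j v π = 0) := by
  exact exists_free_galois_submodule_of_fractional_ideals' L S r hr
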